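/- For every α ∈ (0,1) there exists a constant c_α > 0 such that for all positive integers k, ℓ, n, any ℓ-bit public-coin SMP α-simulation of distributions on [k] with n players must satisfy n ≥ c_α · k/2^ℓ. -/

import Mathlib

open scoped BigOperators ENNReal

/-- Output distribution of a public-coin SMP simulation protocol: seed distribution `ν`,
message maps `π`, referee rule `δ`; i.i.d. samples from `p`. -/
noncomputable def simOut {k l n : ℕ} {U : Type} (ν : PMF U)
    (π : Fin n → U → Fin k → Fin (2 ^ l))
    (δ : U → (Fin n → Fin (2 ^ l)) → PMF (Option (Fin k)))
    (p : PMF (Fin k)) (o : Option (Fin k)) : ℝ≥0∞ :=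
  ∑' u : U, ν u * ∑ xs : Fin n → Fin k,
    (∏ j : Fin n, p (xs j)) * δ u (fun j => π j u (xs j)) o

/-- For every `α ∈ (0,1)` there is a constant `c_α > 0` such that any ℓ-bit public-coin
SMP `α`-simulation of distributions on `[k]` with `n` players (abort probability at most `α`,
and conditioned on not aborting the output is distributed exactly as `p`) must satisfy
`n ≥ c_α·k/2^ℓ`. -/
theorem alpha_simulation_lower_bound (α : ℝ) (hα0 : 0 < α) (hα1 : α < 1) :
    ∃ c : ℝ, 0 < c ∧
      ∀ (k l n : ℕ), 0 < k → 0 < l → 0 < n →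
        ∀ (U : Type) (ν : PMF U)
          (π : Fin n → U → Fin k → Fin (2 ^ l))
          (δ : U → (Fin n → Fin (2 ^ l)) → PMF (Option (Fin k))),
          (∀ p : PMF (Fin k),
            simOut ν π δ p none ≤ ENNReal.ofReal α ∧
            ∀ x : Fin k, simOut ν π δ p (some x) = (1 - simOut ν π δ p none) * p x) →
          c * k / (2 : ℝ) ^ l ≤ (n : ℝ) := by
  classical
  refine ⟨1 - α, by linarith, ?_⟩
  intro k l n hk hl hn U ν π δ hsim
  have hkE : (k : ℝ≥0∞) ≠ 0 := by exact_mod_cast hk.ne'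
  have hkT : (k : ℝ≥0∞) ≠ ⊤ := ENNReal.natCast_ne_top k
  -- The key inequality, proved in ℝ≥0∞.
  have key : (1 : ℝ≥0∞) - ENNReal.ofReal α
      ≤ (n : ℝ≥0∞) * ((2 ^ l : ℕ) : ℝ≥0∞) * (k : ℝ≥0∞)⁻¹ := by
    rcases lt_or_ge k 2 with hk1 | hk2
    · -- trivial case k = 1
      have hkeq : k = 1 := by omega
      subst hkeq
      have h1 : ((1 : ℕ) : ℝ≥0∞)⁻¹ = 1 := by simp
      rw [h1, mul_one]
      have hn1 : (1 : ℝ≥0∞) ≤ (n : ℝ≥0∞) := by exact_mod_cast hn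
      have hl1 : (1 : ℝ≥0∞) ≤ ((2 ^ l : ℕ) : ℝ≥0∞) := by
        exact_mod_cast Nat.one_le_two_pow
      calc (1 : ℝ≥0∞) - ENNReal.ofReal α ≤ 1 := tsub_le_self
        _ = 1 * 1 := (one_mul 1).symm
        _ ≤ (n : ℝ≥0∞) * ((2 ^ l : ℕ) : ℝ≥0∞) := mul_le_mul' hn1 hl1
    -- main case k ≥ 2
    · haveI : Nonempty (Fin k) := ⟨⟨0, hk⟩⟩
      set pu := PMF.uniformOfFintype (Fin k) with hpu
      have hpuapp : ∀ z : Fin k, pu z = (k : ℝ≥0∞)⁻¹ := by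
        intro z
        simp [hpu, PMF.uniformOfFintype_apply]
      have hcompl : ∀ x : Fin k, ({x}ᶜ : Finset (Fin k)).Nonempty := by
        intro x
        apply Finset.card_pos.mp
        rw [Finset.card_compl]
        simp only [Finset.card_singleton, Fintype.card_fin]
        omega
      -- Structural lemma: the referee can output `x` on message tuple `π · u (xs ·)`
      -- only if the tuple cannot arise from samples all different from `x`.
      have struct : ∀ (x : Fin k) (u : U), ν u ≠ 0 → ∀ xs : Fin n → Fin k,
          (∀ j, ∃ y, y ≠ x ∧ π j u y = π j u (xs j)) →
          δ u (fun j => π j u (xs j)) (some x) = 0 := by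
        intro x u hu xs hxs
        set p' := PMF.uniformOfFinset ({x}ᶜ : Finset (Fin k)) (hcompl x) with hp'
        have hzero : simOut ν π δ p' (some x) = 0 := by
          have h2 := (hsim p').2 x
          have hx0 : p' x = 0 := by
            rw [hp']
            exact PMF.uniformOfFinset_apply_of_notMem (hcompl x)
              (fun h => (Finset.mem_compl.mp h) (Finset.mem_singleton_self x))
          rw [h2, hx0, mul_zero]
        choose ys hy1 hy2 using hxs
        have hterm := (ENNReal.tsum_eq_zero.mp hzero) u
        rcases mul_eq_zero.mp hterm with h | h
        · exact absurd h hu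
        · have hxs0 := (Finset.sum_eq_zero_iff.mp h) ys (Finset.mem_univ _)
          have hys : (fun j => π j u (ys j)) = fun j => π j u (xs j) :=
            funext fun j => hy2 j
          rw [hys] at hxs0
          rcases mul_eq_zero.mp hxs0 with h' | h'
          · exfalso
            have hne : ∀ j, p' (ys j) ≠ 0 := by
              intro j
              rw [hp', PMF.uniformOfFinset_apply]
              have hmem : ys j ∈ ({x}ᶜ : Finset (Fin k)) := by simp [hy1 j]
              rw [if_pos hmem]
              exact ENNReal.inv_ne_zero.mpr (ENNReal.natCast_ne_top _)
            exact (Finset.prod_ne_zero_iff.mpr (fun j _ => hne j)) h'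
          · exact h'
      -- indicator of singleton message cells
      set G : U → Fin n → Fin k → ℝ≥0∞ :=
        fun u j z => if (∀ y, π j u y = π j u z → y = z) then 1 else 0 with hG
      -- pointwise bound on the total output probability
      have hbound : ∀ (u : U), ν u ≠ 0 → ∀ xs : Fin n → Fin k,
          ∑ x : Fin k, δ u (fun j => π j u (xs j)) (some x)
            ≤ ∑ j : Fin n, G u j (xs j) := by
        intro u hu xs
        by_cases hsing : ∃ j, ∀ y, π j u y = π j u (xs j) → y = xs j
        · obtain ⟨j, hj⟩ := hsing
          have hGj : G u j (xs j) = 1 := if_pos hj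
          have hG1 : (1 : ℝ≥0∞) ≤ ∑ j' : Fin n, G u j' (xs j') := by
            rw [← hGj]
            exact Finset.single_le_sum (f := fun j' => G u j' (xs j'))
              (fun _ _ => zero_le) (Finset.mem_univ j)
          refine le_trans ?_ hG1
          calc ∑ x : Fin k, δ u (fun j => π j u (xs j)) (some x)
              = ∑ o ∈ Finset.univ.map ⟨some, Option.some_injective _⟩,
                  δ u (fun j => π j u (xs j)) o := by rw [Finset.sum_map]; rfl
            _ ≤ ∑' o : Option (Fin k), δ u (fun j => π j u (xs j)) o :=
                ENNReal.sum_le_tsum _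
            _ = 1 := (δ u (fun j => π j u (xs j))).tsum_coe
        · push_neg at hsing
          have hz : ∀ x : Fin k, δ u (fun j => π j u (xs j)) (some x) = 0 := by
            intro x
            apply struct x u hu xs
            intro j
            by_cases hxj : xs j = x
            · obtain ⟨y, hy, hyne⟩ := hsing j
              exact ⟨y, by rw [← hxj]; exact hyne, hy⟩
            · exact ⟨xs j, hxj, rfl⟩
          rw [Finset.sum_eq_zero (fun x _ => hz x)]
          exact zero_le
      -- per-player counting: at most 2^l singleton cells
      have hcount : ∀ (u : U) (j : Fin n),
          ∑ z : Fin k, G u j z ≤ ((2 ^ l : ℕ) : ℝ≥0∞) := by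
        intro u j
        simp only [hG]
        rw [Finset.sum_boole]
        have hcard : (Finset.univ.filter
            (fun z : Fin k => ∀ y, π j u y = π j u z → y = z)).card ≤ 2 ^ l := by
          have hle := Finset.card_le_card_of_injOn (f := fun z => π j u z)
            (s := Finset.univ.filter (fun z : Fin k => ∀ y, π j u y = π j u z → y = z))
            (t := (Finset.univ : Finset (Fin (2 ^ l))))
            (fun a _ => Finset.mem_univ _)
            (by
              intro z1 h1 z2 h2 heq
              simp only [Finset.coe_filter, Set.mem_setOf_eq, Finset.mem_univ,
                true_and] at h1 h2
              exact h2 z1 heq)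
          simpa using hle
        exact_mod_cast hcard
      -- power-cancellation arithmetic in ℝ≥0∞
      have hinv : ((k : ℝ≥0∞)⁻¹) ^ n * (k : ℝ≥0∞) ^ (n - 1) = (k : ℝ≥0∞)⁻¹ := by
        obtain ⟨m, rfl⟩ : ∃ m, n = m + 1 := ⟨n - 1, by omega⟩
        have hm : m + 1 - 1 = m := by omega
        rw [hm, pow_succ]
        calc ((k : ℝ≥0∞)⁻¹) ^ m * (k : ℝ≥0∞)⁻¹ * (k : ℝ≥0∞) ^ m
            = ((k : ℝ≥0∞)⁻¹ * (k : ℝ≥0∞)) ^ m * (k : ℝ≥0∞)⁻¹ := by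
              rw [mul_pow]; ring
          _ = (k : ℝ≥0∞)⁻¹ := by
              rw [ENNReal.inv_mul_cancel hkE hkT, one_pow, one_mul]
      -- marginalization: sum over all sample tuples of a function of one coordinate
      have hmarg : ∀ (u : U) (j : Fin n),
          ∑ xs : Fin n → Fin k, (∏ i : Fin n, pu (xs i)) * G u j (xs j)
            ≤ ((2 ^ l : ℕ) : ℝ≥0∞) * (k : ℝ≥0∞)⁻¹ := by
        intro u j
        have hprod : ∀ xs : Fin n → Fin k,
            (∏ i : Fin n, pu (xs i)) = ((k : ℝ≥0∞)⁻¹) ^ n := by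
          intro xs
          rw [Finset.prod_congr rfl (fun i _ => hpuapp (xs i))]
          simp
        have hcardW : Fintype.card ({ i : Fin n // i ≠ j } → Fin k) = k ^ (n - 1) := by
          rw [Fintype.card_fun]
          congr 1
          · exact Fintype.card_fin k
          · rw [Fintype.card_subtype_compl, Fintype.card_subtype_eq, Fintype.card_fin]
        calc ∑ xs : Fin n → Fin k, (∏ i : Fin n, pu (xs i)) * G u j (xs j)
            = ∑ xs : Fin n → Fin k, ((k : ℝ≥0∞)⁻¹) ^ n * G u j (xs j) :=
              Finset.sum_congr rfl (fun xs _ => by rw [hprod xs])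
          _ = ((k : ℝ≥0∞)⁻¹) ^ n * ∑ xs : Fin n → Fin k, G u j (xs j) := by
              rw [Finset.mul_sum]
          _ = ((k : ℝ≥0∞)⁻¹) ^ n *
                ∑ pr : Fin k × ({ i : Fin n // i ≠ j } → Fin k), G u j pr.1 := by
              congr 1
              exact Fintype.sum_equiv (Equiv.piSplitAt j (fun _ => Fin k))
                _ _ (fun xs => rfl)
          _ = ((k : ℝ≥0∞)⁻¹) ^ n *
                ((k : ℝ≥0∞) ^ (n - 1) * ∑ z : Fin k, G u j z) := by
              congr 1
              rw [Fintype.sum_prod_type]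
              rw [Finset.sum_congr rfl
                (fun z _ => Finset.sum_const (G u j z))]
              rw [← Finset.smul_sum]
              rw [Finset.card_univ, hcardW, nsmul_eq_mul]
              push_cast
              ring
          _ = ((k : ℝ≥0∞)⁻¹) ^ n * (k : ℝ≥0∞) ^ (n - 1) * ∑ z : Fin k, G u j z := by
              ring
          _ = (k : ℝ≥0∞)⁻¹ * ∑ z : Fin k, G u j z := by rw [hinv]
          _ ≤ (k : ℝ≥0∞)⁻¹ * ((2 ^ l : ℕ) : ℝ≥0∞) :=
              mul_le_mul_right (hcount u j) _
          _ = ((2 ^ l : ℕ) : ℝ≥0∞) * (k : ℝ≥0∞)⁻¹ := mul_comm _ _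
      -- total non-abort probability under the uniform distribution
      set a := simOut ν π δ pu none with ha
      have h1 : ∑ x : Fin k, simOut ν π δ pu (some x) = 1 - a := by
        calc ∑ x : Fin k, simOut ν π δ pu (some x)
            = ∑ _x : Fin k, (1 - a) * (k : ℝ≥0∞)⁻¹ :=
              Finset.sum_congr rfl (fun x _ => by
                rw [(hsim pu).2 x, hpuapp x])
          _ = (Fintype.card (Fin k)) • ((1 - a) * (k : ℝ≥0∞)⁻¹) := by
              rw [Finset.sum_const, Finset.card_univ]
          _ = (k : ℝ≥0∞) * ((1 - a) * (k : ℝ≥0∞)⁻¹) := by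
              rw [Fintype.card_fin, nsmul_eq_mul]
          _ = (1 - a) * ((k : ℝ≥0∞) * (k : ℝ≥0∞)⁻¹) := by ring
          _ = 1 - a := by rw [ENNReal.mul_inv_cancel hkE hkT, mul_one]
      have h2 : ∑ x : Fin k, simOut ν π δ pu (some x)
          ≤ (n : ℝ≥0∞) * ((2 ^ l : ℕ) : ℝ≥0∞) * (k : ℝ≥0∞)⁻¹ := by
        simp only [simOut]
        rw [← Summable.tsum_finsetSum (fun (x : Fin k) _ => ENNReal.summable)]
        have hpt : ∀ u : U,
            ∑ x : Fin k, ν u * ∑ xs : Fin n → Fin k,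
              (∏ i : Fin n, pu (xs i)) * δ u (fun j => π j u (xs j)) (some x)
            ≤ ν u * ((n : ℝ≥0∞) * (((2 ^ l : ℕ) : ℝ≥0∞) * (k : ℝ≥0∞)⁻¹)) := by
          intro u
          by_cases hu : ν u = 0
          · simp [hu]
          · calc ∑ x : Fin k, ν u * ∑ xs : Fin n → Fin k,
                  (∏ i : Fin n, pu (xs i)) * δ u (fun j => π j u (xs j)) (some x)
                = ν u * ∑ x : Fin k, ∑ xs : Fin n → Fin k,
                  (∏ i : Fin n, pu (xs i)) * δ u (fun j => π j u (xs j)) (some x) := by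
                  rw [Finset.mul_sum]
              _ = ν u * ∑ xs : Fin n → Fin k, (∏ i : Fin n, pu (xs i)) *
                    ∑ x : Fin k, δ u (fun j => π j u (xs j)) (some x) := by
                  rw [Finset.sum_comm]
                  congr 1
                  exact Finset.sum_congr rfl (fun xs _ => by rw [Finset.mul_sum])
              _ ≤ ν u * ∑ xs : Fin n → Fin k, (∏ i : Fin n, pu (xs i)) *
                    ∑ j : Fin n, G u j (xs j) := by
                  refine mul_le_mul_right (Finset.sum_le_sum (fun xs _ => ?_)) _
                  exact mul_le_mul_right (hbound u hu xs) _
              _ = ν u * ∑ j : Fin n, ∑ xs : Fin n → Fin k,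
                    (∏ i : Fin n, pu (xs i)) * G u j (xs j) := by
                  congr 1
                  rw [Finset.sum_comm]
                  exact Finset.sum_congr rfl (fun xs _ => by rw [Finset.mul_sum])
              _ ≤ ν u * ∑ _j : Fin n, (((2 ^ l : ℕ) : ℝ≥0∞) * (k : ℝ≥0∞)⁻¹) := by
                  exact mul_le_mul_right
                    (Finset.sum_le_sum (fun j _ => hmarg u j)) _
              _ = ν u * ((n : ℝ≥0∞) * (((2 ^ l : ℕ) : ℝ≥0∞) * (k : ℝ≥0∞)⁻¹)) := by
                  rw [Finset.sum_const, Finset.card_univ, Fintype.card_fin,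
                    nsmul_eq_mul]
        calc (∑' u : U, ∑ x : Fin k, ν u * ∑ xs : Fin n → Fin k,
              (∏ i : Fin n, pu (xs i)) * δ u (fun j => π j u (xs j)) (some x))
            ≤ ∑' u : U,
                ν u * ((n : ℝ≥0∞) * (((2 ^ l : ℕ) : ℝ≥0∞) * (k : ℝ≥0∞)⁻¹)) :=
              ENNReal.tsum_le_tsum hpt
          _ = (∑' u : U, ν u) *
                ((n : ℝ≥0∞) * (((2 ^ l : ℕ) : ℝ≥0∞) * (k : ℝ≥0∞)⁻¹)) :=
              ENNReal.tsum_mul_right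
          _ = (n : ℝ≥0∞) * ((2 ^ l : ℕ) : ℝ≥0∞) * (k : ℝ≥0∞)⁻¹ := by
              rw [ν.tsum_coe, one_mul, mul_assoc]
      calc (1 : ℝ≥0∞) - ENNReal.ofReal α ≤ 1 - a :=
            tsub_le_tsub_left (hsim pu).1 1
        _ = ∑ x : Fin k, simOut ν π δ pu (some x) := h1.symm
        _ ≤ (n : ℝ≥0∞) * ((2 ^ l : ℕ) : ℝ≥0∞) * (k : ℝ≥0∞)⁻¹ := h2
  -- convert the ℝ≥0∞ inequality to the real goal
  have key2 : ((1 : ℝ≥0∞) - ENNReal.ofReal α) * (k : ℝ≥0∞)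
      ≤ (n : ℝ≥0∞) * ((2 ^ l : ℕ) : ℝ≥0∞) := by
    calc ((1 : ℝ≥0∞) - ENNReal.ofReal α) * (k : ℝ≥0∞)
        ≤ ((n : ℝ≥0∞) * ((2 ^ l : ℕ) : ℝ≥0∞) * (k : ℝ≥0∞)⁻¹) * (k : ℝ≥0∞) :=
          mul_le_mul_left key _
      _ = (n : ℝ≥0∞) * ((2 ^ l : ℕ) : ℝ≥0∞) * ((k : ℝ≥0∞)⁻¹ * (k : ℝ≥0∞)) := by
          rw [mul_assoc]
      _ = (n : ℝ≥0∞) * ((2 ^ l : ℕ) : ℝ≥0∞) := by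
          rw [ENNReal.inv_mul_cancel hkE hkT, mul_one]
  have hsub : (1 : ℝ≥0∞) - ENNReal.ofReal α = ENNReal.ofReal (1 - α) := by
    rw [ENNReal.ofReal_sub _ (le_of_lt hα0), ENNReal.ofReal_one]
  rw [hsub] at key2
  have key3 : ENNReal.ofReal ((1 - α) * k) ≤ ENNReal.ofReal ((n : ℝ) * (2 : ℝ) ^ l) := by
    rw [ENNReal.ofReal_mul (by linarith), ENNReal.ofReal_mul (by positivity)]
    rw [ENNReal.ofReal_natCast]
    calc ENNReal.ofReal (1 - α) * (k : ℝ≥0∞)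
        ≤ (n : ℝ≥0∞) * ((2 ^ l : ℕ) : ℝ≥0∞) := key2
      _ = ENNReal.ofReal (n : ℝ) * ENNReal.ofReal ((2 : ℝ) ^ l) := by
          rw [ENNReal.ofReal_natCast]
          congr 1
          rw [show ((2 : ℝ) ^ l) = (((2 ^ l : ℕ) : ℝ)) by push_cast; ring,
            ENNReal.ofReal_natCast]
  have hreal : (1 - α) * k ≤ (n : ℝ) * (2 : ℝ) ^ l :=
    (ENNReal.ofReal_le_ofReal_iff (by positivity)).mp key3
  rw [div_le_iff₀ (by positivity)]
  exact hreal
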